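/- Let c ≥ 1 be real and let x > 1 + c be real. Then ∫_{-2√c}^{2√c} (1/(x - t)) · ((1+c)/(2π)) · √(4c - t²)/((1+c)² - t²) dt = ((1-c)x + (1+c)·√(x² - 4c)) / (2(x² - (1+c)²)); that is, the Cauchy transform of the Kesten–McKay law with parameter c ≥ 1 has this closed form on (1+c, ∞). -/

import Mathlib

open Real Set MeasureTheory intervalIntegral

noncomputable def Fgen (r y t : ℝ) : ℝ :=
  y * Real.arcsin (t / r) -
    Real.sqrt (y ^ 2 - r ^ 2) * Real.arcsin ((y * t - r ^ 2) / (r * (y - t))) -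
    Real.sqrt (r ^ 2 - t ^ 2)

lemma Fgen_cont {r y : ℝ} (hr : 0 < r) (hy : r ≤ y) :
    ContinuousOn (Fgen r y) (Icc (-r) r) := by
  unfold Fgen
  apply ContinuousOn.sub
  apply ContinuousOn.sub
  · exact (continuous_const.mul (Real.continuous_arcsin.comp
      (continuous_id.div_const r))).continuousOn
  · rcases eq_or_lt_of_le hy with h | h
    · have h0 : Real.sqrt (y ^ 2 - r ^ 2) = 0 := by
        rw [← h]; simp
      simp only [h0, zero_mul]
      exact continuousOn_const
    · apply ContinuousOn.mul continuousOn_const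
      apply Real.continuous_arcsin.comp_continuousOn
      apply ContinuousOn.div
      · exact (continuous_const.mul continuous_id |>.sub continuous_const).continuousOn
      · exact (continuous_const.mul (continuous_const.sub continuous_id)).continuousOn
      · intro t ht
        have : t ≤ r := ht.2
        have : 0 < y - t := by linarith
        positivity
  · exact (Real.continuous_sqrt.comp (continuous_const.sub (continuous_pow 2))).continuousOn

lemma Fgen_deriv {r y t : ℝ} (hr : 0 < r) (hy : r ≤ y) (ht : t ∈ Ioo (-r) r) :
    HasDerivAt (Fgen r y) (Real.sqrt (r ^ 2 - t ^ 2) / (y - t)) t := by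
  obtain ⟨ht1, ht2⟩ := ht
  have hyt : 0 < y - t := by linarith
  have hRpos : 0 < r ^ 2 - t ^ 2 := by nlinarith
  have hR : 0 < Real.sqrt (r ^ 2 - t ^ 2) := Real.sqrt_pos.2 hRpos
  have hR2 : Real.sqrt (r ^ 2 - t ^ 2) ^ 2 = r ^ 2 - t ^ 2 := Real.sq_sqrt hRpos.le
  -- first term
  have h1 : HasDerivAt (fun t => y * Real.arcsin (t / r))
      (y / Real.sqrt (r ^ 2 - t ^ 2)) t := by
    have harg : (t / r) ≠ -1 ∧ (t / r) ≠ 1 := by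
      constructor
      · intro h
        have : t = -r := by field_simp at h; linarith
        linarith
      · intro h
        have : t = r := by
          field_simp at h
          linarith
        linarith
    have hb : HasDerivAt (fun t : ℝ => t / r) (1 / r) t := by
      simpa using (hasDerivAt_id t).div_const r
    have := (Real.hasDerivAt_arcsin harg.1 harg.2).comp t hb
    refine (this.const_mul y).congr_deriv ?_
    have hs : Real.sqrt (1 - (t / r) ^ 2) = Real.sqrt (r ^ 2 - t ^ 2) / r := by
      rw [show 1 - (t / r) ^ 2 = (r ^ 2 - t ^ 2) / r ^ 2 by field_simp,
        Real.sqrt_div hRpos.le, Real.sqrt_sq hr.le]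
    rw [hs]
    field_simp
  -- third term
  have h3 : HasDerivAt (fun t => Real.sqrt (r ^ 2 - t ^ 2))
      (-t / Real.sqrt (r ^ 2 - t ^ 2)) t := by
    have hu : HasDerivAt (fun t : ℝ => r ^ 2 - t ^ 2) (-(2 * t)) t := by
      simpa using (hasDerivAt_pow 2 t).const_sub (r ^ 2)
    have := (Real.hasDerivAt_sqrt hRpos.ne').comp t hu
    refine this.congr_deriv ?_
    field_simp
  -- second term
  have h2 : HasDerivAt (fun t => Real.sqrt (y ^ 2 - r ^ 2) *
      Real.arcsin ((y * t - r ^ 2) / (r * (y - t))))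
      ((y ^ 2 - r ^ 2) / (Real.sqrt (r ^ 2 - t ^ 2) * (y - t))) t := by
    rcases eq_or_lt_of_le hy with h | h
    · have h0' : y ^ 2 - r ^ 2 = 0 := by rw [← h]; ring
      simp only [h0', Real.sqrt_zero, zero_mul, zero_div]
      exact hasDerivAt_const t 0
    · have hSpos : 0 < y ^ 2 - r ^ 2 := by nlinarith
      have hden : r * (y - t) ≠ 0 := by positivity
      set v := (y * t - r ^ 2) / (r * (y - t)) with hv
      have hkey : (r * (y - t)) ^ 2 - (y * t - r ^ 2) ^ 2 = (y ^ 2 - r ^ 2) * (r ^ 2 - t ^ 2) := by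
        ring
      have hv2 : v ^ 2 < 1 := by
        rw [hv, div_pow, div_lt_one (by positivity)]
        nlinarith [mul_pos hSpos hRpos]
      have hvne : v ≠ -1 ∧ v ≠ 1 := by
        constructor <;> intro h' <;> rw [h'] at hv2 <;> norm_num at hv2
      have hvd : HasDerivAt (fun t => (y * t - r ^ 2) / (r * (y - t)))
          ((y ^ 2 - r ^ 2) / (r * (y - t) ^ 2)) t := by
        have hn : HasDerivAt (fun t : ℝ => y * t - r ^ 2) y t := by
          simpa using (hasDerivAt_id t).const_mul y |>.sub_const (r ^ 2)
        have hd : HasDerivAt (fun t : ℝ => r * (y - t)) (-r) t := by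
          simpa using ((hasDerivAt_id t).const_sub y).const_mul r
        have := hn.div hd hden
        refine this.congr_deriv ?_
        field_simp
        ring
      have := (Real.hasDerivAt_arcsin hvne.1 hvne.2).comp t hvd
      have hs : Real.sqrt (1 - v ^ 2) =
          Real.sqrt (y ^ 2 - r ^ 2) * Real.sqrt (r ^ 2 - t ^ 2) / (r * (y - t)) := by
        rw [show 1 - v ^ 2 = ((y ^ 2 - r ^ 2) * (r ^ 2 - t ^ 2)) / (r * (y - t)) ^ 2 by
            rw [hv]; field_simp; linarith [hkey],
          Real.sqrt_div (by positivity), Real.sqrt_sq (by positivity),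
          Real.sqrt_mul hSpos.le]
      have hSz : 0 < Real.sqrt (y ^ 2 - r ^ 2) := Real.sqrt_pos.2 hSpos
      refine (this.const_mul (Real.sqrt (y ^ 2 - r ^ 2))).congr_deriv ?_
      rw [hs, one_div_div]
      field_simp
  have := (h1.sub h2).sub h3
  refine this.congr_deriv ?_
  field_simp
  linear_combination (-1 : ℝ) * hR2

lemma Fgen_at_neg {r y : ℝ} (hr : 0 < r) (hy : r ≤ y) :
    Fgen r y (-r) = -(Real.pi / 2) * (y - Real.sqrt (y ^ 2 - r ^ 2)) := by
  unfold Fgen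
  have h1 : (-r) / r = -1 := by field_simp
  have h2 : (y * (-r) - r ^ 2) / (r * (y - (-r))) = -1 := by
    rw [div_eq_iff (by nlinarith)]; ring
  rw [h1, h2, Real.arcsin_neg_one]
  rw [show r ^ 2 - (-r) ^ 2 = 0 by ring, Real.sqrt_zero]
  ring

lemma Fgen_at_pos {r y : ℝ} (hr : 0 < r) (hy : r ≤ y) :
    Fgen r y r = (Real.pi / 2) * (y - Real.sqrt (y ^ 2 - r ^ 2)) := by
  unfold Fgen
  have h1 : r / r = 1 := by field_simp
  rw [h1, Real.arcsin_one, show r ^ 2 - r ^ 2 = 0 by ring, Real.sqrt_zero]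
  rcases eq_or_lt_of_le hy with h | h
  · have h0 : Real.sqrt (y ^ 2 - r ^ 2) = 0 := by rw [← h]; simp
    rw [h0]; ring
  · have h2 : (y * r - r ^ 2) / (r * (y - r)) = 1 := by
      rw [div_eq_one_iff_eq (by nlinarith)]; ring
    rw [h2, Real.arcsin_one]; ring

noncomputable def Gfun (c x t : ℝ) : ℝ :=
  (1 + c) / (2 * Real.pi) *
    ((1 / ((1 + c) ^ 2 - x ^ 2)) * Fgen (2 * Real.sqrt c) x t +
      (1 / (2 * (1 + c) * (x - (1 + c)))) * Fgen (2 * Real.sqrt c) (1 + c) t -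
      (1 / (2 * (1 + c) * (x + (1 + c)))) * Fgen (2 * Real.sqrt c) (1 + c) (-t))

theorem stmt_13 (c : ℝ) (hc : 1 ≤ c) (x : ℝ) (hx : 1 + c < x) :
    ∫ t in (-(2 * Real.sqrt c))..(2 * Real.sqrt c),
        1 / (x - t) *
          ((1 + c) / (2 * Real.pi) * Real.sqrt (4 * c - t ^ 2) / ((1 + c) ^ 2 - t ^ 2)) =
      ((1 - c) * x + (1 + c) * Real.sqrt (x ^ 2 - 4 * c)) /
        (2 * (x ^ 2 - (1 + c) ^ 2)) := by
  have hc0 : (0 : ℝ) < c := by linarith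
  have hsc : 0 < Real.sqrt c := Real.sqrt_pos.2 hc0
  have hscsq : Real.sqrt c ^ 2 = c := Real.sq_sqrt hc0.le
  set r := 2 * Real.sqrt c with hrdef
  have hr : 0 < r := by positivity
  have hr2 : r ^ 2 = 4 * c := by rw [hrdef]; nlinarith [hscsq]
  have hra : r ≤ 1 + c := by nlinarith [sq_nonneg (Real.sqrt c - 1)]
  have hrx : r < x := lt_of_le_of_lt hra hx
  have hSa : Real.sqrt ((1 + c) ^ 2 - r ^ 2) = c - 1 := by
    rw [show (1 + c) ^ 2 - r ^ 2 = (c - 1) ^ 2 by rw [hr2]; ring,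
      Real.sqrt_sq (by linarith)]
  have hd1 : ((1 + c) ^ 2 - x ^ 2) ≠ 0 := by nlinarith
  have hd2 : (2 * (1 + c) * (x - (1 + c))) ≠ 0 :=
    ne_of_gt (mul_pos (by linarith) (by linarith))
  have hd3 : (2 * (1 + c) * (x + (1 + c))) ≠ 0 :=
    ne_of_gt (mul_pos (by linarith) (by linarith))
  -- continuity of Gfun
  have Gcont : ContinuousOn (Gfun c x) (Icc (-r) r) := by
    apply ContinuousOn.mul continuousOn_const
    apply ContinuousOn.sub
    apply ContinuousOn.add
    · exact ContinuousOn.mul continuousOn_const (Fgen_cont hr hrx.le)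
    · exact ContinuousOn.mul continuousOn_const (Fgen_cont hr hra)
    · apply ContinuousOn.mul continuousOn_const
      apply (Fgen_cont hr hra).comp continuous_neg.continuousOn
      intro t ht
      simp only [mem_Icc] at ht ⊢
      constructor <;> linarith [ht.1, ht.2]
  -- derivative of Gfun
  have Gderiv : ∀ t ∈ Ioo (-r) r, HasDerivAt (Gfun c x)
      (1 / (x - t) *
        ((1 + c) / (2 * Real.pi) * Real.sqrt (4 * c - t ^ 2) / ((1 + c) ^ 2 - t ^ 2))) t := by
    intro t ht
    have hnt : -t ∈ Ioo (-r) r := by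
      constructor <;> [linarith [ht.2]; linarith [ht.1]]
    have d1 := Fgen_deriv hr hrx.le ht
    have d2 := Fgen_deriv hr hra ht
    have d3 := (Fgen_deriv hr hra hnt).comp t (hasDerivAt_neg t)
    have total := (((d1.const_mul (1 / ((1 + c) ^ 2 - x ^ 2))).add
      (d2.const_mul (1 / (2 * (1 + c) * (x - (1 + c)))))).sub
      (d3.const_mul (1 / (2 * (1 + c) * (x + (1 + c)))))).const_mul
        ((1 + c) / (2 * Real.pi))
    have heq : HasDerivAt (Gfun c x) _ t := total
    refine heq.congr_deriv ?_
    have hxt : 0 < x - t := by linarith [ht.2]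
    have hat : 0 < 1 + c - t := by linarith [ht.2]
    have hat' : 0 < 1 + c + t := by linarith [ht.1]
    have hct : 0 < (1 + c) ^ 2 - t ^ 2 := by nlinarith
    have hsq : Real.sqrt (4 * c - t ^ 2) = Real.sqrt (r ^ 2 - (-t) ^ 2) := by
      rw [neg_sq, hr2]
    rw [hsq, show Real.sqrt (r ^ 2 - t ^ 2) = Real.sqrt (r ^ 2 - (-t) ^ 2) by rw [neg_sq]]
    have hpi : Real.pi ≠ 0 := Real.pi_ne_zero
    have e1 : x - (1 + c) ≠ 0 := ne_of_gt (by linarith)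
    have e2 : x + (1 + c) ≠ 0 := ne_of_gt (by linarith)
    have e3 : 1 + c ≠ 0 := ne_of_gt (by linarith)
    have e4 : 1 + c + t ≠ 0 := ne_of_gt hat'
    have e5 : 1 + c - t ≠ 0 := ne_of_gt hat
    have e6 : x - t ≠ 0 := ne_of_gt hxt
    have e7 : 1 + c - -t ≠ 0 := by rw [sub_neg_eq_add]; exact e4
    have e8 : (1 + c) ^ 2 - t ^ 2 ≠ 0 := ne_of_gt hct
    field_simp
    ring
  -- nonnegativity of integrand
  have fpos : ∀ t ∈ Ioo (-r) r, 0 ≤ 1 / (x - t) *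
      ((1 + c) / (2 * Real.pi) * Real.sqrt (4 * c - t ^ 2) / ((1 + c) ^ 2 - t ^ 2)) := by
    intro t ht
    have hxt : 0 < x - t := by linarith [ht.2]
    have hct : 0 < (1 + c) ^ 2 - t ^ 2 := by nlinarith [ht.1, ht.2]
    have h1 : 0 ≤ (1 + c) / (2 * Real.pi) * Real.sqrt (4 * c - t ^ 2) := by positivity
    exact mul_nonneg (by positivity) (div_nonneg h1 hct.le)
  -- integrability
  have hab : (-r : ℝ) ≤ r := by linarith
  have hmin : min (-r) r = -r := min_eq_left hab
  have hmax : max (-r) r = r := max_eq_right hab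
  have hInt : IntervalIntegrable (fun t => 1 / (x - t) *
      ((1 + c) / (2 * Real.pi) * Real.sqrt (4 * c - t ^ 2) / ((1 + c) ^ 2 - t ^ 2)))
      volume (-r) r := by
    apply intervalIntegrable_deriv_of_nonneg (g := Gfun c x)
    · rwa [uIcc_of_le hab]
    · intro t ht
      exact Gderiv t (by rwa [hmin, hmax] at ht)
    · intro t ht
      exact fpos t (by rwa [hmin, hmax] at ht)
  rw [integral_eq_sub_of_hasDeriv_right_of_le hab Gcont
    (fun t ht => (Gderiv t ht).hasDerivWithinAt) hInt]
  -- evaluate endpoints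
  unfold Gfun
  rw [← hrdef, neg_neg, Fgen_at_pos hr hrx.le, Fgen_at_neg hr hrx.le,
    Fgen_at_pos hr hra, Fgen_at_neg hr hra, hSa,
    show Real.sqrt (x ^ 2 - r ^ 2) = Real.sqrt (x ^ 2 - 4 * c) by rw [hr2]]
  have hpi : Real.pi ≠ 0 := Real.pi_ne_zero
  have hd4 : (2 * (x ^ 2 - (1 + c) ^ 2)) ≠ 0 := by nlinarith
  have e1 : x - (1 + c) ≠ 0 := ne_of_gt (by linarith)
  have e2 : x + (1 + c) ≠ 0 := ne_of_gt (by linarith)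
  have e3 : 1 + c ≠ 0 := ne_of_gt (by linarith)
  have e4 : x ^ 2 - (1 + c) ^ 2 ≠ 0 := by nlinarith
  field_simp
  ring
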